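/- For every binary classifier v : A → {0,1}, every weight function w : A → ℝ and every feature i ∈ N: ∑_{a ∈ A} w(a) ∑_{b ∈ A_i} w(a_{-i}, b) · |v(a_{-i}, b) − v(a)| = 2 · ∑_{a_{-i} ∈ A_{-i}} w(W_{a_{-i}}) · w(L_{a_{-i}}), where w(W_{a_{-i}}) = ∑_{b ∈ A_i : v(a_{-i},b) = 1} w(a_{-i}, b) and w(L_{a_{-i}}) = ∑_{b ∈ A_i : v(a_{-i},b) = 0} w(a_{-i}, b). -/
import Mathlib

/-- Combine a partial profile (omitting feature i) with a state b of feature i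
into a full profile. -/
def combineProfile {ι : Type*} [DecidableEq ι] {A : ι → Type*}
    (i : ι) (f : ∀ j : {j : ι // j ≠ i}, A j.1) (b : A i) : ∀ k, A k :=
  fun k => if h : k = i then cast (congrArg A h).symm b else f ⟨k, h⟩

lemma abs_fin2 (u v : Fin 2) :
    |((u : ℕ) : ℝ) - ((v : ℕ) : ℝ)|
      = ((u : ℕ) : ℝ) + ((v : ℕ) : ℝ) - 2 * ((u : ℕ) : ℝ) * ((v : ℕ) : ℝ) := by
  fin_cases u <;> fin_cases v <;> norm_num

lemma key {α : Type*} [Fintype α] [DecidableEq α] (w : α → ℝ) (x : α → Fin 2) :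
    ∑ c, w c * ∑ b, w b * |((x b : ℕ) : ℝ) - ((x c : ℕ) : ℝ)|
      = 2 * ((∑ b ∈ Finset.univ.filter (fun b => x b = 1), w b)
           * (∑ b ∈ Finset.univ.filter (fun b => x b = 0), w b)) := by
  set r : α → ℝ := fun b => ((x b : ℕ) : ℝ) with hr
  set S : ℝ := ∑ b, w b * r b with hS
  set T : ℝ := ∑ b, w b with hT
  have hin : ∀ c, ∑ b, w b * |r b - r c| = S + T * r c - 2 * S * r c := by
    intro c
    have : ∀ b, w b * |r b - r c| = w b * r b + w b * r c - 2 * (w b * r b) * r c := by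
      intro b; rw [hr]; simp only []; rw [abs_fin2]; ring
    rw [Finset.sum_congr rfl fun b _ => this b]
    rw [Finset.sum_sub_distrib, Finset.sum_add_distrib, ← Finset.sum_mul, ← Finset.sum_mul,
      ← Finset.mul_sum]
  have hW : (∑ b ∈ Finset.univ.filter (fun b => x b = 1), w b) = S := by
    rw [hS, Finset.sum_filter]
    apply Finset.sum_congr rfl
    intro b _
    rcases Fin.exists_fin_two.mp ⟨x b, rfl⟩ with h | h <;> simp [hr, h]
  have hL : (∑ b ∈ Finset.univ.filter (fun b => x b = 0), w b) = T - S := by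
    rw [hS, hT, ← Finset.sum_sub_distrib, Finset.sum_filter]
    apply Finset.sum_congr rfl
    intro b _
    rcases Fin.exists_fin_two.mp ⟨x b, rfl⟩ with h | h <;> simp [hr, h]
  calc ∑ c, w c * ∑ b, w b * |r b - r c|
      = ∑ c, (w c * S + w c * r c * T - 2 * (w c * r c) * S) := by
        apply Finset.sum_congr rfl; intro c _; rw [hin c]; ring
    _ = T * S + S * T - 2 * S * S := by
        rw [Finset.sum_sub_distrib, Finset.sum_add_distrib, ← Finset.sum_mul, ← Finset.sum_mul,
          ← Finset.sum_mul, hS, hT, show (∑ b, 2 * (w b * r b)) = 2 * S from by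
            rw [hS, Finset.mul_sum]]
    _ = 2 * (S * (T - S)) := by ring
    _ = _ := by rw [hW, hL]

lemma combine_symm {ι : Type*} [DecidableEq ι] {A : ι → Type*}
    (i : ι) (f : ∀ j : {j : ι // j ≠ i}, A j.1) (c : A i) :
    (Equiv.piSplitAt i A).symm (c, f) = combineProfile i f c := by
  funext k
  simp only [Equiv.piSplitAt_symm_apply, combineProfile]
  split
  · rename_i h; subst h; rfl
  · rfl

lemma update_combine {ι : Type*} [DecidableEq ι] {A : ι → Type*}
    (i : ι) (f : ∀ j : {j : ι // j ≠ i}, A j.1) (c b : A i) :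
    Function.update (combineProfile i f c) i b = combineProfile i f b := by
  funext k
  rcases eq_or_ne k i with h | h
  · subst h; simp [combineProfile]
  · simp [Function.update, combineProfile, h]

/-- Weighted win/loss product identity: for every binary
classifier v, weight function w and feature i,
∑_a w(a) ∑_b w(a_{-i},b)·|v(a_{-i},b) − v(a)|
  = 2 ∑_{a_{-i}} w(W_{a_{-i}}) · w(L_{a_{-i}}). -/
theorem weighted_win_loss_product_identity
    {ι : Type*} [Fintype ι] [DecidableEq ι]
    {A : ι → Type*} [∀ i, Fintype (A i)] [∀ i, DecidableEq (A i)]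
    [∀ i, Nonempty (A i)]
    (v : (∀ j, A j) → Fin 2) (w : (∀ j, A j) → ℝ) (i : ι) :
    ∑ a : ∀ j, A j, w a * ∑ b : A i,
        w (Function.update a i b) *
          |((v (Function.update a i b) : ℕ) : ℝ) - ((v a : ℕ) : ℝ)|
      = 2 * ∑ f : (∀ j : {j : ι // j ≠ i}, A j.1),
          (∑ b ∈ Finset.univ.filter (fun b : A i => v (combineProfile i f b) = 1),
              w (combineProfile i f b))
            * (∑ b ∈ Finset.univ.filter (fun b : A i => v (combineProfile i f b) = 0),
              w (combineProfile i f b)) := by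
  rw [← Equiv.sum_comp (Equiv.piSplitAt i A).symm, Fintype.sum_prod_type, Finset.sum_comm,
    Finset.mul_sum]
  apply Finset.sum_congr rfl
  intro f _
  simp only [combine_symm, update_combine]
  exact key (fun b => w (combineProfile i f b)) (fun b => v (combineProfile i f b))
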